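/- Let K₁ and K₂ be randomized mechanisms, modeled as functions assigning to each dataset D a probability measure K₁(D) on a measurable space Ω₁ and K₂(D) on a measurable space Ω₂. If K₁ satisfies ε₁-differential privacy and K₂ satisfies ε₂-differential privacy with respect to the same adjacency relation on datasets, then the sequential composition D ↦ K₁(D) ⊗ K₂(D) (the product measure, i.e., running both mechanisms with independent randomness) satisfies (ε₁ + ε₂)-differential privacy: for all adjacent datasets D, D' and every measurable set S ⊆ Ω₁ × Ω₂, (K₁(D) ⊗ K₂(D))(S) ≤ e^{ε₁+ε₂} · (K₁(D') ⊗ K₂(D'))(S). -/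

import Mathlib

open MeasureTheory

/-- **Sequential composition of differential privacy.**
If `K₁` is `ε₁`-differentially private and `K₂` is `ε₂`-differentially private with respect to
the same adjacency relation, then the sequential composition `D ↦ K₁(D) ⊗ K₂(D)` (product
measure, i.e. independent randomness) is `(ε₁ + ε₂)`-differentially private. -/
theorem dp_sequential_composition
    {Data : Type*} {Ω₁ Ω₂ : Type*} [MeasurableSpace Ω₁] [MeasurableSpace Ω₂]
    (adj : Data → Data → Prop)
    (K₁ : Data → Measure Ω₁) (K₂ : Data → Measure Ω₂)
    [∀ d, IsProbabilityMeasure (K₁ d)] [∀ d, IsProbabilityMeasure (K₂ d)]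
    (ε₁ ε₂ : ℝ)
    (h₁ : ∀ D D', adj D D' → ∀ S : Set Ω₁, MeasurableSet S →
      K₁ D S ≤ ENNReal.ofReal (Real.exp ε₁) * K₁ D' S)
    (h₂ : ∀ D D', adj D D' → ∀ S : Set Ω₂, MeasurableSet S →
      K₂ D S ≤ ENNReal.ofReal (Real.exp ε₂) * K₂ D' S) :
    ∀ D D', adj D D' → ∀ S : Set (Ω₁ × Ω₂), MeasurableSet S →
      ((K₁ D).prod (K₂ D)) S ≤ ENNReal.ofReal (Real.exp (ε₁ + ε₂)) * ((K₁ D').prod (K₂ D')) S := by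
  intro D D' hadj S hS
  have hK1 : K₁ D ≤ ENNReal.ofReal (Real.exp ε₁) • K₁ D' := by
    refine Measure.le_iff.2 fun s hs => ?_
    simpa using h₁ D D' hadj s hs
  have hmeas : Measurable fun x => K₂ D' (Prod.mk x ⁻¹' S) :=
    measurable_measure_prodMk_left hS
  rw [Measure.prod_apply hS, Measure.prod_apply hS]
  calc ∫⁻ x, K₂ D (Prod.mk x ⁻¹' S) ∂ K₁ D
      ≤ ∫⁻ x, ENNReal.ofReal (Real.exp ε₂) * K₂ D' (Prod.mk x ⁻¹' S) ∂ K₁ D := by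
        refine lintegral_mono fun x => h₂ D D' hadj _ (measurable_prodMk_left hS)
    _ ≤ ∫⁻ x, ENNReal.ofReal (Real.exp ε₂) * K₂ D' (Prod.mk x ⁻¹' S)
          ∂ (ENNReal.ofReal (Real.exp ε₁) • K₁ D') := lintegral_mono' hK1 le_rfl
    _ = ENNReal.ofReal (Real.exp ε₁) * (ENNReal.ofReal (Real.exp ε₂)
          * ∫⁻ x, K₂ D' (Prod.mk x ⁻¹' S) ∂ K₁ D') := by
        rw [lintegral_smul_measure, lintegral_const_mul _ hmeas, smul_eq_mul]
    _ = ENNReal.ofReal (Real.exp (ε₁ + ε₂)) * ∫⁻ x, K₂ D' (Prod.mk x ⁻¹' S) ∂ K₁ D' := by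
        rw [Real.exp_add, ENNReal.ofReal_mul (Real.exp_pos _).le, mul_assoc]
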